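/- Let 0<q<1, α>0 and β>0. Then for every z∈ℝ with |z|·(1−q)^α < 1, the series ∑_{k=0}^∞ z^k/Γ_q(αk+β) defining the q-Mittag-Leffler function e_{α,β}(z;q) converges absolutely. -/

import Mathlib

open scoped BigOperators

/-- The infinite q-Pochhammer symbol `(a;q)_∞ = ∏_{j=0}^∞ (1 - q^j a)`. -/
noncomputable def qPochInf (q a : ℝ) : ℝ := ∏' j : ℕ, (1 - q ^ j * a)

/-- The q-gamma function `Γ_q(x) = ((q;q)_∞/(q^x;q)_∞)·(1-q)^{1-x}`. -/
noncomputable def qGamma (q x : ℝ) : ℝ :=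
  (qPochInf q q / qPochInf q (q ^ x)) * (1 - q) ^ (1 - x)

/-- The q-Mittag-Leffler function `e_{α,β}(z;q) = ∑_{k=0}^∞ z^k/Γ_q(αk+β)`. -/
noncomputable def qML (q α β z : ℝ) : ℝ := ∑' k : ℕ, z ^ k / qGamma q (α * k + β)

lemma neg_log_one_sub_le {x : ℝ} (_h0 : 0 ≤ x) (h1 : x < 1) :
    -Real.log (1 - x) ≤ x / (1 - x) := by
  have hx : 0 < 1 - x := by linarith
  have := Real.log_le_sub_one_of_pos (inv_pos.mpr hx)
  rw [Real.log_inv] at this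
  have : -Real.log (1 - x) ≤ (1 - x)⁻¹ - 1 := this
  calc -Real.log (1 - x) ≤ (1 - x)⁻¹ - 1 := this
    _ = x / (1 - x) := by field_simp; ring

lemma summable_log_qPoch {q a : ℝ} (hq0 : 0 < q) (hq1 : q < 1)
    (ha0 : 0 ≤ a) (ha1 : a < 1) :
    Summable (fun n : ℕ => Real.log (1 - q ^ n * a)) := by
  have hkey : ∀ n : ℕ, q ^ n * a ≤ a := fun n => by
    have : q ^ n ≤ 1 := pow_le_one₀ hq0.le hq1.le
    nlinarith
  have hfac : ∀ n : ℕ, 0 ≤ q ^ n * a := fun n => by positivity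
  have hsum : Summable (fun n : ℕ => -Real.log (1 - q ^ n * a)) := by
    refine Summable.of_nonneg_of_le ?_ ?_
      ((summable_geometric_of_lt_one hq0.le hq1).mul_left (a / (1 - a)))
    · intro n
      simp only [neg_nonneg]
      exact Real.log_nonpos (by nlinarith [hfac n, hkey n]) (by nlinarith [hfac n])
    · intro n
      have h1 : q ^ n * a < 1 := lt_of_le_of_lt (hkey n) ha1
      have := neg_log_one_sub_le (hfac n) h1
      have h2 : q ^ n * a / (1 - q ^ n * a) ≤ q ^ n * a / (1 - a) := by
        apply div_le_div_of_nonneg_left (hfac n) (by linarith) (by linarith [hkey n])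
      calc -Real.log (1 - q ^ n * a) ≤ q ^ n * a / (1 - q ^ n * a) := this
        _ ≤ q ^ n * a / (1 - a) := h2
        _ = (a / (1 - a)) * q ^ n := by ring
  simpa using hsum.neg

lemma qPochInf_eq_exp {q a : ℝ} (hq0 : 0 < q) (hq1 : q < 1)
    (ha0 : 0 ≤ a) (ha1 : a < 1) :
    qPochInf q a = Real.exp (∑' n : ℕ, Real.log (1 - q ^ n * a)) := by
  have hfac : ∀ n : ℕ, 0 < 1 - q ^ n * a := fun n => by
    have h1 : q ^ n ≤ 1 := pow_le_one₀ hq0.le hq1.le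
    have : q ^ n * a ≤ a := by nlinarith [pow_nonneg hq0.le n]
    linarith
  have hsum := summable_log_qPoch hq0 hq1 ha0 ha1
  have h2 : Real.exp (∑' n : ℕ, Real.log (1 - q ^ n * a)) = ∏' n : ℕ, (1 - q ^ n * a) :=
    Real.rexp_tsum_eq_tprod hfac hsum
  rw [qPochInf, ← h2]

lemma qPochInf_pos {q a : ℝ} (hq0 : 0 < q) (hq1 : q < 1)
    (ha0 : 0 ≤ a) (ha1 : a < 1) : 0 < qPochInf q a := by
  rw [qPochInf_eq_exp hq0 hq1 ha0 ha1]; exact Real.exp_pos _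

lemma qPochInf_le_one {q a : ℝ} (hq0 : 0 < q) (hq1 : q < 1)
    (ha0 : 0 ≤ a) (ha1 : a < 1) : qPochInf q a ≤ 1 := by
  rw [qPochInf_eq_exp hq0 hq1 ha0 ha1]
  have hle : (∑' n : ℕ, Real.log (1 - q ^ n * a)) ≤ 0 := by
    apply tsum_nonpos
    intro n
    have h1 : q ^ n ≤ 1 := pow_le_one₀ hq0.le hq1.le
    have h2 : 0 ≤ q ^ n * a := by positivity
    exact Real.log_nonpos (by nlinarith) (by nlinarith)
  calc Real.exp (∑' n : ℕ, Real.log (1 - q ^ n * a)) ≤ Real.exp 0 :=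
        Real.exp_le_exp.mpr hle
    _ = 1 := Real.exp_zero

set_option maxHeartbeats 1000000 in
theorem qML_summable (q α β : ℝ) (hq0 : 0 < q) (hq1 : q < 1)
    (hα : 0 < α) (hβ : 0 < β) :
    ∀ z : ℝ, |z| * (1 - q) ^ α < 1 →
      Summable (fun k : ℕ => |z ^ k / qGamma q (α * k + β)|) := by
  intro z hz
  have hq' : (0 : ℝ) < 1 - q := by linarith
  have hPq : 0 < qPochInf q q := qPochInf_pos hq0 hq1 hq0.le hq1
  set r : ℝ := |z| * (1 - q) ^ α with hr
  have hr0 : 0 ≤ r := by positivity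
  set C : ℝ := (1 - q) ^ (β - 1) / qPochInf q q with hC
  refine Summable.of_nonneg_of_le (fun k => abs_nonneg _) (fun k => ?_)
    ((summable_geometric_of_lt_one hr0 hz).mul_left C)
  ·
    set x : ℝ := α * k + β with hx
    have hx0 : 0 < x := by positivity
    have hqx0 : 0 < q ^ x := Real.rpow_pos_of_pos hq0 x
    have hqx1 : q ^ x < 1 := Real.rpow_lt_one hq0.le hq1 hx0
    have hPqx : 0 < qPochInf q (q ^ x) := qPochInf_pos hq0 hq1 hqx0.le hqx1
    have hPqx1 : qPochInf q (q ^ x) ≤ 1 := qPochInf_le_one hq0 hq1 hqx0.le hqx1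
    have hpow : (0 : ℝ) < (1 - q) ^ (1 - x) := Real.rpow_pos_of_pos hq' _
    have hΓ : 0 < qGamma q x := by
      rw [qGamma]
      positivity
    -- lower bound on Γ
    have hΓge : qPochInf q q * (1 - q) ^ (1 - x) ≤ qGamma q x := by
      rw [qGamma]
      have : qPochInf q q ≤ qPochInf q q / qPochInf q (q ^ x) := by
        rw [le_div_iff₀ hPqx]
        nlinarith
      nlinarith
    have habs : |z ^ k / qGamma q x| = |z| ^ k / qGamma q x := by
      rw [abs_div, abs_pow, abs_of_pos hΓ]
    rw [habs]
    have hstep : |z| ^ k / qGamma q x ≤ |z| ^ k / (qPochInf q q * (1 - q) ^ (1 - x)) := by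
      apply div_le_div_of_nonneg_left (by positivity) (by positivity) hΓge
    refine hstep.trans (le_of_eq ?_)
    -- rewrite RHS as C * r^k
    have hinv : ((1 - q) ^ (1 - x) : ℝ)⁻¹ = (1 - q) ^ (x - 1) := by
      rw [← Real.rpow_neg hq'.le]
      ring_nf
    have hsplit : ((1 - q) : ℝ) ^ (x - 1) = ((1 - q) ^ α) ^ (k : ℕ) * (1 - q) ^ (β - 1) := by
      have h1 : x - 1 = α * k + (β - 1) := by rw [hx]; ring
      rw [h1, Real.rpow_add hq', Real.rpow_mul hq'.le, Real.rpow_natCast]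
    rw [hC, hr]
    rw [div_eq_mul_inv, mul_inv, hinv, hsplit, mul_pow]
    ring
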